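/- Error reduction for postselection automata: if L ⊆ Σ* is recognized by an RT-PostPFA with error bound ε ∈ (0, 1/2), then L is recognized by some RT-PostPFA with error bound ε²; likewise, if L is recognized by an RT-PostQFA with error bound ε ∈ (0, 1/2), then L is recognized by some RT-PostQFA with error bound ε². In particular, such a machine exists with k-fold tensor-product state space for k = 1 + ⌈log(1/ε + 1)/log(1/ε − 1)⌉, since (ε/(1−ε))^k ≤ ε²/(1−ε²). -/

import Mathlib

noncomputable section

/-- The input alphabet extended with the two endmarkers `¢` and `$`. -/
inductive ESym (α : Type) : Type where
  | cent : ESym α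
  | dollar : ESym α
  | letter : α → ESym α

/-- The state distribution obtained by applying, in order, the matrices for
`¢`, the letters of `w`, and `$` to the standard basis vector at the initial state `0`. -/
def pRun {α : Type} {n : ℕ} (A : ESym α → Matrix (Fin (n + 1)) (Fin (n + 1)) ℝ)
    (w : List α) : Fin (n + 1) → ℝ :=
  (ESym.cent :: (w.map ESym.letter ++ [ESym.dollar])).foldl
    (fun v σ => (A σ).mulVec v) (Pi.single 0 1)

/-- A real-time probabilistic finite automaton with postselection (RT-PostPFA). -/
structure PostPFA (α : Type) where
  n : ℕ
  A : ESym α → Matrix (Fin (n + 1)) (Fin (n + 1)) ℝ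
  nonneg : ∀ σ i j, 0 ≤ A σ i j
  colSum : ∀ σ j, ∑ i, A σ i j = 1
  Qpa : Finset (Fin (n + 1))
  Qpr : Finset (Fin (n + 1))
  disj : Disjoint Qpa Qpr
  postPos : ∀ w : List α,
    0 < (∑ i ∈ Qpa, pRun A w i) + (∑ i ∈ Qpr, pRun A w i)

/-- Acceptance probability before postselection. -/
def PostPFA.pacc {α : Type} (M : PostPFA α) (w : List α) : ℝ :=
  ∑ i ∈ M.Qpa, pRun M.A w i

/-- Rejection probability before postselection. -/
def PostPFA.prej {α : Type} (M : PostPFA α) (w : List α) : ℝ :=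
  ∑ i ∈ M.Qpr, pRun M.A w i

/-- Normalized acceptance probability of an RT-PostPFA. -/
def PostPFA.fa {α : Type} (M : PostPFA α) (w : List α) : ℝ :=
  M.pacc w / (M.pacc w + M.prej w)

/-- Recognition of a language with error bound `ε`. -/
def PostPFA.Recognizes {α : Type} (M : PostPFA α) (L : Set (List α)) (ε : ℝ) : Prop :=
  ∀ w : List α, (w ∈ L → 1 - ε ≤ M.fa w) ∧ (w ∉ L → M.fa w ≤ ε)

/-- The class of languages recognized by RT-PostPFAs with bounded error. -/
def PostS {α : Type} (L : Set (List α)) : Prop :=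
  ∃ (M : PostPFA α) (ε : ℝ), 0 ≤ ε ∧ ε < 1 / 2 ∧ M.Recognizes L ε

/-- Recognition with zero error: `fa = 1` on members, `fa = 0` on non-members. -/
def PostPFA.RecognizesZero {α : Type} (M : PostPFA α) (L : Set (List α)) : Prop :=
  ∀ w : List α, (w ∈ L → M.fa w = 1) ∧ (w ∉ L → M.fa w = 0)

/-- The class of languages recognized by RT-PostPFAs with zero error. -/
def ZPostS {α : Type} (L : Set (List α)) : Prop :=
  ∃ M : PostPFA α, M.RecognizesZero L

/-- The diagonal 0-1 projection matrix supported on a set of states. -/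
def projM {m : ℕ} (S : Finset (Fin m)) : Matrix (Fin m) (Fin m) ℂ :=
  Matrix.diagonal (fun i => if i ∈ S then 1 else 0)

/-- The density matrix obtained by applying, in order, the Kraus families for
`¢`, the letters of `w`, and `$` to the initial density matrix `|q₁⟩⟨q₁|`. -/
def qRun {α : Type} {n : ℕ} {k : ESym α → ℕ}
    (E : ∀ σ : ESym α, Fin (k σ) → Matrix (Fin (n + 1)) (Fin (n + 1)) ℂ)
    (w : List α) : Matrix (Fin (n + 1)) (Fin (n + 1)) ℂ :=
  (ESym.cent :: (w.map ESym.letter ++ [ESym.dollar])).foldl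
    (fun ρ σ => ∑ i : Fin (k σ), E σ i * ρ * (E σ i).conjTranspose)
    (Matrix.single 0 0 1)

/-- A real-time quantum finite automaton with postselection (RT-PostQFA). -/
structure PostQFA (α : Type) where
  n : ℕ
  k : ESym α → ℕ
  E : ∀ σ : ESym α, Fin (k σ) → Matrix (Fin (n + 1)) (Fin (n + 1)) ℂ
  kraus : ∀ σ : ESym α, ∑ i : Fin (k σ), (E σ i).conjTranspose * E σ i = 1
  Qpa : Finset (Fin (n + 1))
  Qpr : Finset (Fin (n + 1))
  disj : Disjoint Qpa Qpr
  postPos : ∀ w : List α,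
    0 < ((projM Qpa * qRun E w).trace).re + ((projM Qpr * qRun E w).trace).re

/-- Acceptance probability before postselection. -/
def PostQFA.pacc {α : Type} (M : PostQFA α) (w : List α) : ℝ :=
  ((projM M.Qpa * qRun M.E w).trace).re

/-- Rejection probability before postselection. -/
def PostQFA.prej {α : Type} (M : PostQFA α) (w : List α) : ℝ :=
  ((projM M.Qpr * qRun M.E w).trace).re

/-- Normalized acceptance probability of an RT-PostQFA. -/
def PostQFA.fa {α : Type} (M : PostQFA α) (w : List α) : ℝ :=
  M.pacc w / (M.pacc w + M.prej w)

/-- Recognition of a language with error bound `ε`. -/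
def PostQFA.Recognizes {α : Type} (M : PostQFA α) (L : Set (List α)) (ε : ℝ) : Prop :=
  ∀ w : List α, (w ∈ L → 1 - ε ≤ M.fa w) ∧ (w ∉ L → M.fa w ≤ ε)

/-- The class of languages recognized by RT-PostQFAs with bounded error. -/
def PostQAL {α : Type} (L : Set (List α)) : Prop :=
  ∃ (M : PostQFA α) (ε : ℝ), 0 ≤ ε ∧ ε < 1 / 2 ∧ M.Recognizes L ε

/-- Recognition with zero error: `fa = 1` on members, `fa = 0` on non-members. -/
def PostQFA.RecognizesZero {α : Type} (M : PostQFA α) (L : Set (List α)) : Prop :=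
  ∀ w : List α, (w ∈ L → M.fa w = 1) ∧ (w ∉ L → M.fa w = 0)

/-- The class of languages recognized by RT-PostQFAs with zero error. -/
def ZPostQAL {α : Type} (L : Set (List α)) : Prop :=
  ∃ M : PostQFA α, M.RecognizesZero L

section ErrRedAux

open Finset Matrix

variable {n n' K : ℕ}

/-- Swap a sum over functions of a product into a product of sums. -/
lemma sum_fn_prod {A R : Type*} [Fintype A] [CommSemiring R] (Φ : Fin K → A → R) :
    ∑ c : Fin K → A, ∏ t, Φ t (c t) = ∏ t, ∑ x, Φ t x :=
  (Fintype.prod_sum Φ).symm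

/-- Tensor power of a vector, transported along an equivalence. -/
def liftV {R : Type*} [CommSemiring R] (e : (Fin K → Fin (n + 1)) ≃ Fin (n' + 1))
    (v : Fin (n + 1) → R) : Fin (n' + 1) → R :=
  fun i => ∏ t, v (e.symm i t)

/-- Tensor power of a matrix, transported along an equivalence. -/
def liftA {R : Type*} [CommSemiring R] (e : (Fin K → Fin (n + 1)) ≃ Fin (n' + 1))
    (A : Matrix (Fin (n + 1)) (Fin (n + 1)) R) :
    Matrix (Fin (n' + 1)) (Fin (n' + 1)) R :=
  Matrix.of fun i j => ∏ t, A (e.symm i t) (e.symm j t)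

lemma liftA_apply {R : Type*} [CommSemiring R] (e : (Fin K → Fin (n + 1)) ≃ Fin (n' + 1))
    (A : Matrix (Fin (n + 1)) (Fin (n + 1)) R) (i j) :
    liftA e A i j = ∏ t, A (e.symm i t) (e.symm j t) := rfl

lemma liftA_mulVec {R : Type*} [CommSemiring R] (e : (Fin K → Fin (n + 1)) ≃ Fin (n' + 1))
    (A : Matrix (Fin (n + 1)) (Fin (n + 1)) R) (v : Fin (n + 1) → R) :
    (liftA e A).mulVec (liftV e v) = liftV e (A.mulVec v) := by
  funext i
  have s1 : (liftA e A).mulVec (liftV e v) i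
      = ∑ j, (∏ t, A (e.symm i t) (e.symm j t)) * ∏ t, v (e.symm j t) := by
    simp only [Matrix.mulVec, dotProduct, liftA, liftV, Matrix.of_apply]
  have s2 : ∑ j, (∏ t, A (e.symm i t) (e.symm j t)) * ∏ t, v (e.symm j t)
      = ∑ j, (fun g : Fin K → Fin (n + 1) =>
          ∏ t, A (e.symm i t) (g t) * v (g t)) (e.symm j) :=
    Finset.sum_congr rfl fun j _ => Finset.prod_mul_distrib.symm
  have s3 := Equiv.sum_comp e.symm
    (fun g : Fin K → Fin (n + 1) => ∏ t, A (e.symm i t) (g t) * v (g t))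
  have s4 := sum_fn_prod (fun t x => A (e.symm i t) x * v x)
  have s5 : (∏ t, ∑ x, A (e.symm i t) x * v x) = liftV e (A.mulVec v) i := by
    simp only [liftV, Matrix.mulVec, dotProduct]
  rw [s1, s2, s3, s4, s5]

lemma liftV_single {R : Type*} [CommSemiring R]
    (e : (Fin K → Fin (n + 1)) ≃ Fin (n' + 1)) (h0 : e.symm 0 = fun _ => 0) :
    liftV e (Pi.single (0 : Fin (n + 1)) (1 : R)) = Pi.single 0 1 := by
  funext i
  by_cases h : i = 0
  · subst h
    show (∏ t, (Pi.single (0 : Fin (n + 1)) (1 : R) : Fin (n + 1) → R) (e.symm 0 t))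
        = (Pi.single (0 : Fin (n' + 1)) (1 : R) : Fin (n' + 1) → R) 0
    rw [h0]
    simp
  · have hne : e.symm i ≠ e.symm 0 := fun hc => h (e.symm.injective hc)
    rw [h0] at hne
    obtain ⟨t, ht⟩ := Function.ne_iff.mp hne
    rw [Pi.single_eq_of_ne h]
    exact Finset.prod_eq_zero (Finset.mem_univ t) (Pi.single_eq_of_ne ht 1)

lemma sum_liftV_filter {R : Type*} [CommSemiring R]
    (e : (Fin K → Fin (n + 1)) ≃ Fin (n' + 1)) (S : Finset (Fin (n + 1)))
    (v : Fin (n + 1) → R) :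
    ∑ i ∈ Finset.univ.filter (fun i => ∀ t, e.symm i t ∈ S), liftV e v i
      = (∑ x ∈ S, v x) ^ K := by
  classical
  have key := Equiv.sum_comp e.symm
    (fun g : Fin K → Fin (n + 1) => if ∀ t, g t ∈ S then ∏ t, v (g t) else 0)
  rw [Finset.sum_filter]
  refine Eq.trans (Eq.trans (Finset.sum_congr rfl fun j _ => rfl) key) ?_
  have h2 : Finset.univ.filter (fun g : Fin K → Fin (n + 1) => ∀ t, g t ∈ S)
      = Fintype.piFinset (fun _ => S) := by
    ext g; simp [Fintype.mem_piFinset]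
  rw [← Finset.sum_filter, h2, Finset.sum_prod_piFinset]
  simp

lemma sum_liftA_col {R : Type*} [CommSemiring R]
    (e : (Fin K → Fin (n + 1)) ≃ Fin (n' + 1))
    (A : Matrix (Fin (n + 1)) (Fin (n + 1)) R) (h : ∀ x, ∑ i, A i x = 1)
    (j : Fin (n' + 1)) : ∑ i, liftA e A i j = 1 := by
  have s1 : ∑ i, liftA e A i j
      = ∑ i, (fun g : Fin K → Fin (n + 1) => ∏ t, A (g t) (e.symm j t)) (e.symm i) :=
    Finset.sum_congr rfl fun i _ => rfl
  have s2 := Equiv.sum_comp e.symm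
    (fun g : Fin K → Fin (n + 1) => ∏ t, A (g t) (e.symm j t))
  have s3 := sum_fn_prod (fun t x => A x (e.symm j t))
  rw [s1, s2, s3]
  simp [h]

lemma liftA_one {R : Type*} [CommSemiring R]
    (e : (Fin K → Fin (n + 1)) ≃ Fin (n' + 1)) :
    liftA e (1 : Matrix (Fin (n + 1)) (Fin (n + 1)) R) = 1 := by
  ext i j
  by_cases h : i = j
  · subst h
    rw [Matrix.one_apply_eq, liftA_apply]
    simp [Matrix.one_apply]
  · have hne : e.symm i ≠ e.symm j := fun hc => h (e.symm.injective hc)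
    obtain ⟨t, ht⟩ := Function.ne_iff.mp hne
    rw [Matrix.one_apply_ne h, liftA_apply]
    exact Finset.prod_eq_zero (Finset.mem_univ t) (Matrix.one_apply_ne ht)

lemma stdb_apply {m : ℕ} (a b : Fin (m + 1)) :
    Matrix.single (0 : Fin (m + 1)) 0 (1 : ℂ) a b
      = if a = 0 ∧ b = 0 then 1 else 0 := by
  by_cases h1 : a = 0 <;> by_cases h2 : b = 0 <;>
    simp [Matrix.single, h1, h2, eq_comm]

lemma liftA_stdBasis (e : (Fin K → Fin (n + 1)) ≃ Fin (n' + 1))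
    (h0 : e.symm 0 = fun _ => 0) :
    liftA e (Matrix.single (0 : Fin (n + 1)) 0 (1 : ℂ))
      = Matrix.single 0 0 1 := by
  ext i j
  rw [stdb_apply, liftA_apply]
  by_cases hi : i = 0
  · by_cases hj : j = 0
    · subst hi; subst hj
      rw [if_pos ⟨rfl, rfl⟩, h0]
      simp [stdb_apply]
    · rw [if_neg (fun hc => hj hc.2)]
      have hne : e.symm j ≠ e.symm 0 := fun hc => hj (e.symm.injective hc)
      rw [h0] at hne
      obtain ⟨t, ht⟩ := Function.ne_iff.mp hne
      refine Finset.prod_eq_zero (Finset.mem_univ t) ?_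
      rw [stdb_apply]
      exact if_neg (fun hc => ht hc.2)
  · rw [if_neg (fun hc => hi hc.1)]
    have hne : e.symm i ≠ e.symm 0 := fun hc => hi (e.symm.injective hc)
    rw [h0] at hne
    obtain ⟨t, ht⟩ := Function.ne_iff.mp hne
    refine Finset.prod_eq_zero (Finset.mem_univ t) ?_
    rw [stdb_apply]
    exact if_neg (fun hc => ht hc.1)

end ErrRedAux

section ErrRedAux2

open Finset Matrix

variable {n n' K : ℕ}

/-! ### Folding lifted matrices -/

lemma foldl_liftA {β : Type*} (e : (Fin K → Fin (n + 1)) ≃ Fin (n' + 1))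
    (A : β → Matrix (Fin (n + 1)) (Fin (n + 1)) ℝ) (l : List β) (v : Fin (n + 1) → ℝ) :
    l.foldl (fun u σ => (liftA e (A σ)).mulVec u) (liftV e v)
      = liftV e (l.foldl (fun u σ => (A σ).mulVec u) v) := by
  induction l generalizing v with
  | nil => rfl
  | cons σ l ih =>
    rw [List.foldl_cons, List.foldl_cons, liftA_mulVec]
    exact ih _

lemma pRun_lift {α : Type} (e : (Fin K → Fin (n + 1)) ≃ Fin (n' + 1))
    (h0 : e.symm 0 = fun _ => 0)
    (A : ESym α → Matrix (Fin (n + 1)) (Fin (n + 1)) ℝ) (w : List α) :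
    pRun (fun σ => liftA e (A σ)) w = liftV e (pRun A w) := by
  unfold pRun
  rw [← liftV_single e h0, foldl_liftA]

lemma foldl_mulVec_nonneg {β : Type*} {m : ℕ}
    (A : β → Matrix (Fin (m + 1)) (Fin (m + 1)) ℝ) (hA : ∀ σ i j, 0 ≤ A σ i j)
    (l : List β) (v : Fin (m + 1) → ℝ) (hv : ∀ i, 0 ≤ v i) :
    ∀ i, 0 ≤ l.foldl (fun u σ => (A σ).mulVec u) v i := by
  induction l generalizing v with
  | nil => exact hv
  | cons σ l ih =>
    rw [List.foldl_cons]
    refine ih _ fun i => ?_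
    show 0 ≤ ∑ j, A σ i j * v j
    exact Finset.sum_nonneg fun j _ => mul_nonneg (hA σ i j) (hv j)

lemma pRun_nonneg {α : Type} {m : ℕ}
    (A : ESym α → Matrix (Fin (m + 1)) (Fin (m + 1)) ℝ) (hA : ∀ σ i j, 0 ≤ A σ i j)
    (w : List α) (i : Fin (m + 1)) : 0 ≤ pRun A w i := by
  unfold pRun
  refine foldl_mulVec_nonneg A hA _ _ (fun i => ?_) i
  by_cases h : i = 0
  · subst h; simp
  · rw [Pi.single_eq_of_ne h]

/-! ### Quantum lifts -/

/-- Tensor power of a Kraus family. -/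
def liftE {kk m' : ℕ} (e : (Fin K → Fin (n + 1)) ≃ Fin (n' + 1))
    (e' : (Fin K → Fin kk) ≃ Fin m')
    (E : Fin kk → Matrix (Fin (n + 1)) (Fin (n + 1)) ℂ) :
    Fin m' → Matrix (Fin (n' + 1)) (Fin (n' + 1)) ℂ :=
  fun p => Matrix.of fun i j => ∏ t, E (e'.symm p t) (e.symm i t) (e.symm j t)

lemma liftE_kraus {kk m' : ℕ} (e : (Fin K → Fin (n + 1)) ≃ Fin (n' + 1))
    (e' : (Fin K → Fin kk) ≃ Fin m')
    (E : Fin kk → Matrix (Fin (n + 1)) (Fin (n + 1)) ℂ)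
    (h : ∑ c, (E c)ᴴ * E c = 1) :
    ∑ p, (liftE e e' E p)ᴴ * liftE e e' E p = 1 := by
  have main : ∑ p, (liftE e e' E p)ᴴ * liftE e e' E p
      = liftA e (∑ c, (E c)ᴴ * E c) := by
    ext i j
    have s1 : (∑ p, (liftE e e' E p)ᴴ * liftE e e' E p) i j
        = ∑ p, ∑ a, star ((liftE e e' E p) a i) * (liftE e e' E p) a j := by
      simp only [Matrix.sum_apply, Matrix.mul_apply, Matrix.conjTranspose_apply]
    have s2 : ∀ (p : Fin m') (a : Fin (n' + 1)),
        star ((liftE e e' E p) a i) * (liftE e e' E p) a j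
          = ∏ t, star (E (e'.symm p t) (e.symm a t) (e.symm i t))
              * E (e'.symm p t) (e.symm a t) (e.symm j t) := by
      intro p a
      show star (∏ t, E (e'.symm p t) (e.symm a t) (e.symm i t))
          * (∏ t, E (e'.symm p t) (e.symm a t) (e.symm j t)) = _
      rw [star_prod, ← Finset.prod_mul_distrib]
    have s3 : ∑ p, ∑ a, star ((liftE e e' E p) a i) * (liftE e e' E p) a j
        = ∑ p, (fun c : Fin K → Fin kk =>
            ∑ a, (fun f : Fin K → Fin (n + 1) =>
              ∏ t, star (E (c t) (f t) (e.symm i t)) * E (c t) (f t) (e.symm j t))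
              (e.symm a)) (e'.symm p) :=
      Finset.sum_congr rfl fun p _ => Finset.sum_congr rfl fun a _ => s2 p a
    have s4 := Equiv.sum_comp e'.symm (fun c : Fin K → Fin kk =>
      ∑ a, (fun f : Fin K → Fin (n + 1) =>
        ∏ t, star (E (c t) (f t) (e.symm i t)) * E (c t) (f t) (e.symm j t)) (e.symm a))
    have s5 : ∀ c : Fin K → Fin kk,
        (∑ a, (fun f : Fin K → Fin (n + 1) =>
          ∏ t, star (E (c t) (f t) (e.symm i t)) * E (c t) (f t) (e.symm j t)) (e.symm a))
        = ∏ t, ∑ y, star (E (c t) y (e.symm i t)) * E (c t) y (e.symm j t) := by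
      intro c
      rw [Equiv.sum_comp e.symm (fun f : Fin K → Fin (n + 1) =>
        ∏ t, star (E (c t) (f t) (e.symm i t)) * E (c t) (f t) (e.symm j t))]
      exact sum_fn_prod (fun t y => star (E (c t) y (e.symm i t)) * E (c t) y (e.symm j t))
    have s6 := sum_fn_prod (fun t (x : Fin kk) =>
      ∑ y, star (E x y (e.symm i t)) * E x y (e.symm j t))
    have s7 : liftA e (∑ c, (E c)ᴴ * E c) i j
        = ∏ t, ∑ x, ∑ y, star (E x y (e.symm i t)) * E x y (e.symm j t) := by
      rw [liftA_apply]
      refine Finset.prod_congr rfl fun t _ => ?_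
      simp only [Matrix.sum_apply, Matrix.mul_apply, Matrix.conjTranspose_apply]
    rw [s1, s3, s4, Finset.sum_congr rfl fun c _ => s5 c, s6, s7]
  rw [main, h, liftA_one]

lemma liftE_step {kk m' : ℕ} (e : (Fin K → Fin (n + 1)) ≃ Fin (n' + 1))
    (e' : (Fin K → Fin kk) ≃ Fin m')
    (E : Fin kk → Matrix (Fin (n + 1)) (Fin (n + 1)) ℂ)
    (ρ : Matrix (Fin (n + 1)) (Fin (n + 1)) ℂ) :
    ∑ p, liftE e e' E p * liftA e ρ * (liftE e e' E p)ᴴ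
      = liftA e (∑ c, E c * ρ * (E c)ᴴ) := by
  ext i j
  have s1 : (∑ p, liftE e e' E p * liftA e ρ * (liftE e e' E p)ᴴ) i j
      = ∑ p, ∑ b, ∑ a, (liftE e e' E p) i a * (liftA e ρ) a b
          * star ((liftE e e' E p) j b) := by
    simp only [Matrix.sum_apply, Matrix.mul_apply, Matrix.conjTranspose_apply,
      Finset.sum_mul]
  have s2 : ∀ (p : Fin m') (b a : Fin (n' + 1)),
      (liftE e e' E p) i a * (liftA e ρ) a b * star ((liftE e e' E p) j b)
        = ∏ t, E (e'.symm p t) (e.symm i t) (e.symm a t) * ρ (e.symm a t) (e.symm b t)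
            * star (E (e'.symm p t) (e.symm j t) (e.symm b t)) := by
    intro p b a
    show (∏ t, E (e'.symm p t) (e.symm i t) (e.symm a t))
        * (∏ t, ρ (e.symm a t) (e.symm b t))
        * star (∏ t, E (e'.symm p t) (e.symm j t) (e.symm b t)) = _
    rw [star_prod, ← Finset.prod_mul_distrib, ← Finset.prod_mul_distrib]
  have s3 : (∑ p, liftE e e' E p * liftA e ρ * (liftE e e' E p)ᴴ) i j
      = ∑ p, (fun c : Fin K → Fin kk =>
          ∑ b, (fun g : Fin K → Fin (n + 1) =>
            ∑ a, (fun f : Fin K → Fin (n + 1) =>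
              ∏ t, E (c t) (e.symm i t) (f t) * ρ (f t) (g t)
                * star (E (c t) (e.symm j t) (g t))) (e.symm a)) (e.symm b)) (e'.symm p) := by
    rw [s1]
    exact Finset.sum_congr rfl fun p _ => Finset.sum_congr rfl fun b _ =>
      Finset.sum_congr rfl fun a _ => s2 p b a
  have s4 := Equiv.sum_comp e'.symm (fun c : Fin K → Fin kk =>
    ∑ b, (fun g : Fin K → Fin (n + 1) =>
      ∑ a, (fun f : Fin K → Fin (n + 1) =>
        ∏ t, E (c t) (e.symm i t) (f t) * ρ (f t) (g t)
          * star (E (c t) (e.symm j t) (g t))) (e.symm a)) (e.symm b))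
  have s5 : ∀ c : Fin K → Fin kk,
      (∑ b, (fun g : Fin K → Fin (n + 1) =>
        ∑ a, (fun f : Fin K → Fin (n + 1) =>
          ∏ t, E (c t) (e.symm i t) (f t) * ρ (f t) (g t)
            * star (E (c t) (e.symm j t) (g t))) (e.symm a)) (e.symm b))
      = ∏ t, ∑ z, ∑ y, E (c t) (e.symm i t) y * ρ y z
          * star (E (c t) (e.symm j t) z) := by
    intro c
    rw [Equiv.sum_comp e.symm (fun g : Fin K → Fin (n + 1) =>
      ∑ a, (fun f : Fin K → Fin (n + 1) =>
        ∏ t, E (c t) (e.symm i t) (f t) * ρ (f t) (g t)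
          * star (E (c t) (e.symm j t) (g t))) (e.symm a))]
    have inner : ∀ g : Fin K → Fin (n + 1),
        (∑ a, (fun f : Fin K → Fin (n + 1) =>
          ∏ t, E (c t) (e.symm i t) (f t) * ρ (f t) (g t)
            * star (E (c t) (e.symm j t) (g t))) (e.symm a))
        = ∏ t, ∑ y, E (c t) (e.symm i t) y * ρ y (g t)
            * star (E (c t) (e.symm j t) (g t)) := by
      intro g
      rw [Equiv.sum_comp e.symm (fun f : Fin K → Fin (n + 1) =>
        ∏ t, E (c t) (e.symm i t) (f t) * ρ (f t) (g t)
          * star (E (c t) (e.symm j t) (g t)))]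
      exact sum_fn_prod (fun t y =>
        E (c t) (e.symm i t) y * ρ y (g t) * star (E (c t) (e.symm j t) (g t)))
    rw [Finset.sum_congr rfl fun g _ => inner g]
    exact sum_fn_prod (fun t z =>
      ∑ y, E (c t) (e.symm i t) y * ρ y z * star (E (c t) (e.symm j t) z))
  have s6 := sum_fn_prod (fun t (x : Fin kk) =>
    ∑ z, ∑ y, E x (e.symm i t) y * ρ y z * star (E x (e.symm j t) z))
  have s7 : liftA e (∑ c, E c * ρ * (E c)ᴴ) i j
      = ∏ t, ∑ x, ∑ z, ∑ y, E x (e.symm i t) y * ρ y z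
          * star (E x (e.symm j t) z) := by
    rw [liftA_apply]
    refine Finset.prod_congr rfl fun t _ => ?_
    simp only [Matrix.sum_apply, Matrix.mul_apply, Matrix.conjTranspose_apply,
      Finset.sum_mul]
  rw [s3, s4, Finset.sum_congr rfl fun c _ => s5 c, s6, s7]

lemma foldl_liftE {β : Type*} (e : (Fin K → Fin (n + 1)) ≃ Fin (n' + 1))
    {kk : β → ℕ} {m' : β → ℕ} (e' : ∀ σ, (Fin K → Fin (kk σ)) ≃ Fin (m' σ))
    (E : ∀ σ, Fin (kk σ) → Matrix (Fin (n + 1)) (Fin (n + 1)) ℂ) (l : List β)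
    (ρ : Matrix (Fin (n + 1)) (Fin (n + 1)) ℂ) :
    l.foldl (fun τ σ => ∑ p : Fin (m' σ), liftE e (e' σ) (E σ) p * τ
        * (liftE e (e' σ) (E σ) p)ᴴ) (liftA e ρ)
      = liftA e (l.foldl (fun τ σ => ∑ c : Fin (kk σ), E σ c * τ * (E σ c)ᴴ) ρ) := by
  induction l generalizing ρ with
  | nil => rfl
  | cons σ l ih =>
    rw [List.foldl_cons, List.foldl_cons, liftE_step]
    exact ih _

end ErrRedAux2

section ErrRedAux3

open Finset Matrix
open scoped ComplexOrder

/-! ### Positivity facts for quantum runs -/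

lemma foldl_kraus_psd {β : Type*} {m : ℕ} {k : β → ℕ}
    (E : ∀ σ, Fin (k σ) → Matrix (Fin (m + 1)) (Fin (m + 1)) ℂ) (l : List β)
    (ρ : Matrix (Fin (m + 1)) (Fin (m + 1)) ℂ) (hρ : ρ.PosSemidef) :
    (l.foldl (fun τ σ => ∑ i : Fin (k σ), E σ i * τ * (E σ i)ᴴ) ρ).PosSemidef := by
  induction l generalizing ρ with
  | nil => exact hρ
  | cons σ l ih =>
    rw [List.foldl_cons]
    refine ih _ ?_
    refine Finset.sum_induction _ _ (fun a b ha hb => ha.add hb)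
      Matrix.PosSemidef.zero fun i _ => ?_
    exact hρ.mul_mul_conjTranspose_same (E σ i)

lemma stdBasis_psd {m : ℕ} :
    (Matrix.single (0 : Fin (m + 1)) 0 (1 : ℂ)).PosSemidef := by
  have hd : Matrix.single (0 : Fin (m + 1)) 0 (1 : ℂ)
      = Matrix.diagonal (Pi.single 0 1) := by
    ext a b
    rw [stdb_apply]
    by_cases h1 : a = 0 <;> by_cases h2 : b = 0 <;>
      simp [Matrix.diagonal_apply, h1, h2, Pi.single_eq_of_ne, eq_comm]
  rw [hd]
  refine Matrix.PosSemidef.diagonal fun i => ?_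
  by_cases h : i = 0
  · subst h; simp
  · rw [Pi.single_eq_of_ne h]
    exact le_of_eq rfl

lemma qRun_psd {α : Type} {m : ℕ} {k : ESym α → ℕ}
    (E : ∀ σ : ESym α, Fin (k σ) → Matrix (Fin (m + 1)) (Fin (m + 1)) ℂ)
    (w : List α) : (qRun E w).PosSemidef := by
  unfold qRun
  exact foldl_kraus_psd E _ _ stdBasis_psd

lemma psd_diag_nonneg {m : ℕ} {ρ : Matrix (Fin m) (Fin m) ℂ} (hρ : ρ.PosSemidef)
    (i : Fin m) : 0 ≤ ρ i i := by
  exact hρ.diag_nonneg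

lemma trace_projM {m : ℕ} (S : Finset (Fin m)) (ρ : Matrix (Fin m) (Fin m) ℂ) :
    (projM S * ρ).trace = ∑ i ∈ S, ρ i i := by
  unfold projM
  simp only [Matrix.trace, Matrix.diag_apply, Matrix.diagonal_mul, ite_mul, one_mul,
    zero_mul]
  rw [Finset.sum_ite_mem, Finset.univ_inter]

/-! ### Ratio boosting inequalities -/

lemma ratio_up {pa pr ε : ℝ} {K : ℕ} (hpa : 0 ≤ pa) (hpr : 0 ≤ pr)
    (hpos : 0 < pa + pr) (hε0 : 0 < ε) (hε : ε < 1 / 2)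
    (hK : (ε / (1 - ε)) ^ K ≤ ε ^ 2 / (1 - ε ^ 2))
    (h : 1 - ε ≤ pa / (pa + pr)) :
    1 - ε ^ 2 ≤ pa ^ K / (pa ^ K + pr ^ K) := by
  have hε1 : (0 : ℝ) < 1 - ε := by linarith
  have hε2 : (0 : ℝ) < 1 - ε ^ 2 := by nlinarith
  have hpa' : (1 - ε) * (pa + pr) ≤ pa := (le_div_iff₀ hpos).mp h
  have hpapos : 0 < pa := lt_of_lt_of_le (by positivity) hpa'
  have hr : pr ≤ ε / (1 - ε) * pa := by
    rw [div_mul_eq_mul_div, le_div_iff₀ hε1]; nlinarith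
  have hrK : pr ^ K ≤ (ε / (1 - ε)) ^ K * pa ^ K := by
    calc pr ^ K ≤ (ε / (1 - ε) * pa) ^ K := pow_le_pow_left₀ hpr hr K
      _ = _ := mul_pow _ _ _
  have hc : pr ^ K ≤ ε ^ 2 / (1 - ε ^ 2) * pa ^ K :=
    hrK.trans (mul_le_mul_of_nonneg_right hK (pow_nonneg hpa K))
  have hpaK : 0 < pa ^ K := pow_pos hpapos K
  have hden : 0 < pa ^ K + pr ^ K :=
    add_pos_of_pos_of_nonneg hpaK (pow_nonneg hpr K)
  rw [le_div_iff₀ hden]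
  have hfield : (1 - ε ^ 2) * (ε ^ 2 / (1 - ε ^ 2)) = ε ^ 2 := by
    field_simp
  have h2 : (1 - ε ^ 2) * (ε ^ 2 / (1 - ε ^ 2) * pa ^ K) = ε ^ 2 * pa ^ K := by
    rw [← mul_assoc]
    rw [mul_div_cancel₀ _ hε2.ne']
  nlinarith [mul_le_mul_of_nonneg_left hc hε2.le, h2]

lemma ratio_down {pa pr ε : ℝ} {K : ℕ} (hpa : 0 ≤ pa) (hpr : 0 ≤ pr)
    (hpos : 0 < pa + pr) (hε0 : 0 < ε) (hε : ε < 1 / 2)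
    (hK : (ε / (1 - ε)) ^ K ≤ ε ^ 2 / (1 - ε ^ 2))
    (h : pa / (pa + pr) ≤ ε) :
    pa ^ K / (pa ^ K + pr ^ K) ≤ ε ^ 2 := by
  have hε1 : (0 : ℝ) < 1 - ε := by linarith
  have hε2 : (0 : ℝ) < 1 - ε ^ 2 := by nlinarith
  have hpa' : pa ≤ ε * (pa + pr) := (div_le_iff₀ hpos).mp h
  have hr : pa ≤ ε / (1 - ε) * pr := by
    rw [div_mul_eq_mul_div, le_div_iff₀ hε1]; nlinarith
  have hprpos : 0 < pr := by
    rcases hpr.lt_or_eq with h' | h'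
    · exact h'
    · exfalso
      have hpa0 : pa ≤ 0 := by rw [← h'] at hr; simpa using hr
      rw [← h'] at hpos; linarith
  have hrK : pa ^ K ≤ (ε / (1 - ε)) ^ K * pr ^ K := by
    calc pa ^ K ≤ (ε / (1 - ε) * pr) ^ K := pow_le_pow_left₀ hpa hr K
      _ = _ := mul_pow _ _ _
  have hc : pa ^ K ≤ ε ^ 2 / (1 - ε ^ 2) * pr ^ K :=
    hrK.trans (mul_le_mul_of_nonneg_right hK (pow_nonneg hpr K))
  have hprK : 0 < pr ^ K := pow_pos hprpos K
  have hden : 0 < pa ^ K + pr ^ K :=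
    add_pos_of_nonneg_of_pos (pow_nonneg hpa K) hprK
  rw [div_le_iff₀ hden]
  have h2 : (1 - ε ^ 2) * (ε ^ 2 / (1 - ε ^ 2) * pr ^ K) = ε ^ 2 * pr ^ K := by
    rw [← mul_assoc]
    rw [mul_div_cancel₀ _ hε2.ne']
  nlinarith [mul_le_mul_of_nonneg_left hc hε2.le, h2]

lemma key_pow {ε : ℝ} (hε0 : 0 < ε) (hε : ε < 1 / 2) :
    (ε / (1 - ε)) ^ (1 + ⌈Real.log (1 / ε + 1) / Real.log (1 / ε - 1)⌉₊)
      ≤ ε ^ 2 / (1 - ε ^ 2) := by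
  set m := ⌈Real.log (1 / ε + 1) / Real.log (1 / ε - 1)⌉₊ with hm
  have hε1 : (0 : ℝ) < 1 - ε := by linarith
  have hb1 : (1 : ℝ) < 1 / ε - 1 := by
    have h2 : (2 : ℝ) < 1 / ε := by
      rw [lt_div_iff₀ hε0]; linarith
    linarith
  have ha0 : (0 : ℝ) < 1 / ε + 1 := by positivity
  have hlogb : 0 < Real.log (1 / ε - 1) := Real.log_pos hb1
  have hmle : Real.log (1 / ε + 1) / Real.log (1 / ε - 1) ≤ (m : ℝ) := Nat.le_ceil _
  have hlog : Real.log (1 / ε + 1) ≤ Real.log ((1 / ε - 1) ^ m) := by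
    rw [Real.log_pow]
    rw [div_le_iff₀ hlogb] at hmle
    linarith
  have hab : 1 / ε + 1 ≤ (1 / ε - 1) ^ m :=
    (Real.log_le_log_iff ha0 (pow_pos (by linarith) m)).mp hlog
  have hrpos : 0 < ε / (1 - ε) := div_pos hε0 hε1
  have hε2 : (0 : ℝ) < 1 - ε ^ 2 := by nlinarith
  have hεp1 : (0 : ℝ) < 1 + ε := by linarith
  have hd1 : 1 / ε - 1 = (1 - ε) / ε := by field_simp
  have hrval : ε / (1 - ε) = (1 / ε - 1)⁻¹ := by rw [hd1, inv_div]
  have hd2 : 1 / ε + 1 = (1 + ε) / ε := by field_simp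
  have haval : ε / (1 + ε) = (1 / ε + 1)⁻¹ := by rw [hd2, inv_div]
  have hrm : (ε / (1 - ε)) ^ m ≤ ε / (1 + ε) := by
    rw [hrval, inv_pow, haval]
    exact inv_anti₀ ha0 hab
  have hfin : (ε / (1 - ε)) ^ (1 + m)
      = (ε / (1 - ε)) * (ε / (1 - ε)) ^ m := by
    rw [pow_add, pow_one]
  rw [hfin]
  have step : (ε / (1 - ε)) * (ε / (1 - ε)) ^ m ≤ (ε / (1 - ε)) * (ε / (1 + ε)) :=
    mul_le_mul_of_nonneg_left hrm hrpos.le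
  refine step.trans (le_of_eq ?_)
  rw [div_mul_div_comm]
  have : (1 - ε) * (1 + ε) = 1 - ε ^ 2 := by ring
  rw [this, ← sq]

end ErrRedAux3

section ErrRedAux4

open Finset Matrix
open scoped ComplexOrder

lemma pow_add_pow_pos {a b : ℝ} (ha : 0 ≤ a) (hb : 0 ≤ b) (h : 0 < a + b) (K : ℕ) :
    0 < a ^ K + b ^ K := by
  rcases lt_or_ge 0 a with h' | h'
  · exact add_pos_of_pos_of_nonneg (pow_pos h' K) (pow_nonneg hb K)
  · have ha0 : a = 0 := le_antisymm h' ha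
    have hbpos : 0 < b := by rw [ha0] at h; simpa using h
    exact add_pos_of_nonneg_of_pos (pow_nonneg ha K) (pow_pos hbpos K)

lemma sum_diag_im {m : ℕ} {ρ : Matrix (Fin m) (Fin m) ℂ} (hρ : ρ.PosSemidef)
    (S : Finset (Fin m)) : (∑ i ∈ S, ρ i i).im = 0 := by
  rw [Complex.im_sum]
  refine Finset.sum_eq_zero fun i _ => ?_
  have h1 := (Complex.le_def.mp (psd_diag_nonneg hρ i)).2
  simpa using h1.symm

lemma sum_diag_re_nonneg {m : ℕ} {ρ : Matrix (Fin m) (Fin m) ℂ} (hρ : ρ.PosSemidef)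
    (S : Finset (Fin m)) : 0 ≤ (∑ i ∈ S, ρ i i).re := by
  rw [Complex.re_sum]
  refine Finset.sum_nonneg fun i _ => ?_
  have h1 := (Complex.le_def.mp (psd_diag_nonneg hρ i)).1
  simpa using h1

end ErrRedAux4

open scoped ComplexOrder in
/-- Error reduction for postselection automata: error bound `ε ∈ (0, 1/2)` can be
improved to `ε²`, both probabilistically and quantumly; moreover the number of copies
`k = 1 + ⌈log(1/ε + 1) / log(1/ε − 1)⌉` satisfies `(ε/(1−ε))^k ≤ ε²/(1−ε²)`. -/
theorem error_reduction {α : Type} [Fintype α] (L : Set (List α)) (ε : ℝ)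
    (hε0 : 0 < ε) (hε : ε < 1 / 2) :
    ((∃ M : PostPFA α, M.Recognizes L ε) → ∃ M : PostPFA α, M.Recognizes L (ε ^ 2)) ∧
      ((∃ M : PostQFA α, M.Recognizes L ε) → ∃ M : PostQFA α, M.Recognizes L (ε ^ 2)) ∧
      (ε / (1 - ε)) ^ (1 + ⌈Real.log (1 / ε + 1) / Real.log (1 / ε - 1)⌉₊) ≤
        ε ^ 2 / (1 - ε ^ 2) := by
  classical
  set m := ⌈Real.log (1 / ε + 1) / Real.log (1 / ε - 1)⌉₊ with hmdef
  have hkey : (ε / (1 - ε)) ^ (1 + m) ≤ ε ^ 2 / (1 - ε ^ 2) := key_pow hε0 hε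
  set K := 1 + m with hKdef
  have hKpos : 0 < K := by omega
  refine ⟨?_, ?_, hkey⟩
  · -- probabilistic part
    rintro ⟨M, hM⟩
    have hNpos : 0 < (M.n + 1) ^ K := pow_pos (Nat.succ_pos _) _
    set n' : ℕ := (M.n + 1) ^ K - 1 with hn'
    have hN : (M.n + 1) ^ K = n' + 1 := by omega
    let e : (Fin K → Fin (M.n + 1)) ≃ Fin (n' + 1) :=
      finFunctionFinEquiv.trans (finCongr hN)
    have h1 : e (fun _ => 0) = 0 := by
      apply Fin.val_injective
      show ((finCongr hN) (finFunctionFinEquiv fun _ => (0 : Fin (M.n + 1)))).val = 0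
      simp
    have h0 : e.symm 0 = fun _ => 0 := by
      rw [← h1, Equiv.symm_apply_apply]
    let A' : ESym α → Matrix (Fin (n' + 1)) (Fin (n' + 1)) ℝ :=
      fun σ => liftA e (M.A σ)
    let Qpa' : Finset (Fin (n' + 1)) :=
      Finset.univ.filter fun i => ∀ t, e.symm i t ∈ M.Qpa
    let Qpr' : Finset (Fin (n' + 1)) :=
      Finset.univ.filter fun i => ∀ t, e.symm i t ∈ M.Qpr
    have hpaw : ∀ w, 0 ≤ M.pacc w := fun w =>
      Finset.sum_nonneg fun i _ => pRun_nonneg M.A M.nonneg w i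
    have hprw : ∀ w, 0 ≤ M.prej w := fun w =>
      Finset.sum_nonneg fun i _ => pRun_nonneg M.A M.nonneg w i
    have hpa : ∀ w : List α, ∑ i ∈ Qpa', pRun A' w i = M.pacc w ^ K := by
      intro w
      rw [show pRun A' w = liftV e (pRun M.A w) from pRun_lift e h0 M.A w]
      exact sum_liftV_filter e M.Qpa (pRun M.A w)
    have hpr : ∀ w : List α, ∑ i ∈ Qpr', pRun A' w i = M.prej w ^ K := by
      intro w
      rw [show pRun A' w = liftV e (pRun M.A w) from pRun_lift e h0 M.A w]
      exact sum_liftV_filter e M.Qpr (pRun M.A w)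
    have hnn : ∀ σ (i j : Fin (n' + 1)), 0 ≤ A' σ i j := by
      intro σ i j
      show 0 ≤ ∏ t, M.A σ (e.symm i t) (e.symm j t)
      exact Finset.prod_nonneg fun t _ => M.nonneg σ _ _
    have hdisj : Disjoint Qpa' Qpr' := by
      rw [Finset.disjoint_left]
      intro i hia hir
      simp only [Qpa', Qpr', Finset.mem_filter] at hia hir
      exact absurd (hir.2 ⟨0, hKpos⟩)
        (Finset.disjoint_left.mp M.disj (hia.2 ⟨0, hKpos⟩))
    have hpp : ∀ w : List α,
        0 < (∑ i ∈ Qpa', pRun A' w i) + ∑ i ∈ Qpr', pRun A' w i := by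
      intro w
      rw [hpa w, hpr w]
      exact pow_add_pow_pos (hpaw w) (hprw w) (M.postPos w) K
    refine ⟨⟨n', A', hnn, fun σ j => sum_liftA_col e (M.A σ) (M.colSum σ) j,
      Qpa', Qpr', hdisj, hpp⟩, ?_⟩
    intro w
    have hfa : (PostPFA.fa ⟨n', A', hnn,
          fun σ j => sum_liftA_col e (M.A σ) (M.colSum σ) j,
          Qpa', Qpr', hdisj, hpp⟩ w : ℝ)
        = M.pacc w ^ K / (M.pacc w ^ K + M.prej w ^ K) := by
      show (∑ i ∈ Qpa', pRun A' w i) /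
        ((∑ i ∈ Qpa', pRun A' w i) + ∑ i ∈ Qpr', pRun A' w i) = _
      rw [hpa w, hpr w]
    constructor
    · intro hw
      rw [hfa]
      exact ratio_up (hpaw w) (hprw w) (M.postPos w) hε0 hε hkey ((hM w).1 hw)
    · intro hw
      rw [hfa]
      exact ratio_down (hpaw w) (hprw w) (M.postPos w) hε0 hε hkey ((hM w).2 hw)
  · -- quantum part
    rintro ⟨M, hM⟩
    have hNpos : 0 < (M.n + 1) ^ K := pow_pos (Nat.succ_pos _) _
    set n' : ℕ := (M.n + 1) ^ K - 1 with hn'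
    have hN : (M.n + 1) ^ K = n' + 1 := by omega
    let e : (Fin K → Fin (M.n + 1)) ≃ Fin (n' + 1) :=
      finFunctionFinEquiv.trans (finCongr hN)
    have h1 : e (fun _ => 0) = 0 := by
      apply Fin.val_injective
      show ((finCongr hN) (finFunctionFinEquiv fun _ => (0 : Fin (M.n + 1)))).val = 0
      simp
    have h0 : e.symm 0 = fun _ => 0 := by
      rw [← h1, Equiv.symm_apply_apply]
    let e' : ∀ σ : ESym α, (Fin K → Fin (M.k σ)) ≃ Fin (M.k σ ^ K) :=
      fun _ => finFunctionFinEquiv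
    let E' : ∀ σ : ESym α, Fin (M.k σ ^ K) → Matrix (Fin (n' + 1)) (Fin (n' + 1)) ℂ :=
      fun σ => liftE e (e' σ) (M.E σ)
    have hqrun : ∀ w : List α, qRun (k := fun σ => M.k σ ^ K) E' w
        = liftA e (qRun M.E w) := by
      intro w
      unfold qRun
      rw [← liftA_stdBasis e h0]
      exact foldl_liftE e e' M.E _ _
    have hpsd : ∀ w : List α, (qRun M.E w).PosSemidef := fun w => qRun_psd M.E w
    have hzpa : ∀ w : List α, (∑ x ∈ M.Qpa, qRun M.E w x x) = ((M.pacc w : ℝ) : ℂ) := by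
      intro w
      apply Complex.ext
      · rw [Complex.ofReal_re]
        show _ = ((projM M.Qpa * qRun M.E w).trace).re
        rw [trace_projM]
      · rw [Complex.ofReal_im]
        exact sum_diag_im (hpsd w) M.Qpa
    have hzpr : ∀ w : List α, (∑ x ∈ M.Qpr, qRun M.E w x x) = ((M.prej w : ℝ) : ℂ) := by
      intro w
      apply Complex.ext
      · rw [Complex.ofReal_re]
        show _ = ((projM M.Qpr * qRun M.E w).trace).re
        rw [trace_projM]
      · rw [Complex.ofReal_im]
        exact sum_diag_im (hpsd w) M.Qpr
    have hpaw : ∀ w, 0 ≤ M.pacc w := by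
      intro w
      show 0 ≤ ((projM M.Qpa * qRun M.E w).trace).re
      rw [trace_projM]
      exact sum_diag_re_nonneg (hpsd w) M.Qpa
    have hprw : ∀ w, 0 ≤ M.prej w := by
      intro w
      show 0 ≤ ((projM M.Qpr * qRun M.E w).trace).re
      rw [trace_projM]
      exact sum_diag_re_nonneg (hpsd w) M.Qpr
    let Qpa' : Finset (Fin (n' + 1)) :=
      Finset.univ.filter fun i => ∀ t, e.symm i t ∈ M.Qpa
    let Qpr' : Finset (Fin (n' + 1)) :=
      Finset.univ.filter fun i => ∀ t, e.symm i t ∈ M.Qpr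
    have hpa : ∀ w : List α,
        ((projM Qpa' * qRun (k := fun σ => M.k σ ^ K) E' w).trace).re
          = M.pacc w ^ K := by
      intro w
      rw [hqrun w, trace_projM]
      have h1 : ∑ i ∈ Qpa', liftA e (qRun M.E w) i i
          = (∑ x ∈ M.Qpa, qRun M.E w x x) ^ K :=
        Eq.trans (Finset.sum_congr rfl fun i _ => rfl)
          (sum_liftV_filter e M.Qpa fun x => qRun M.E w x x)
      rw [h1, hzpa w, ← Complex.ofReal_pow, Complex.ofReal_re]
    have hpr : ∀ w : List α,
        ((projM Qpr' * qRun (k := fun σ => M.k σ ^ K) E' w).trace).re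
          = M.prej w ^ K := by
      intro w
      rw [hqrun w, trace_projM]
      have h1 : ∑ i ∈ Qpr', liftA e (qRun M.E w) i i
          = (∑ x ∈ M.Qpr, qRun M.E w x x) ^ K :=
        Eq.trans (Finset.sum_congr rfl fun i _ => rfl)
          (sum_liftV_filter e M.Qpr fun x => qRun M.E w x x)
      rw [h1, hzpr w, ← Complex.ofReal_pow, Complex.ofReal_re]
    have hdisj : Disjoint Qpa' Qpr' := by
      rw [Finset.disjoint_left]
      intro i hia hir
      simp only [Qpa', Qpr', Finset.mem_filter] at hia hir
      exact absurd (hir.2 ⟨0, hKpos⟩)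
        (Finset.disjoint_left.mp M.disj (hia.2 ⟨0, hKpos⟩))
    have hpp : ∀ w : List α,
        0 < ((projM Qpa' * qRun (k := fun σ => M.k σ ^ K) E' w).trace).re
          + ((projM Qpr' * qRun (k := fun σ => M.k σ ^ K) E' w).trace).re := by
      intro w
      rw [hpa w, hpr w]
      exact pow_add_pow_pos (hpaw w) (hprw w) (M.postPos w) K
    have hkr : ∀ σ : ESym α, ∑ i, (E' σ i).conjTranspose * E' σ i = 1 :=
      fun σ => liftE_kraus e (e' σ) (M.E σ) (M.kraus σ)
    refine ⟨⟨n', fun σ => M.k σ ^ K, E', hkr, Qpa', Qpr', hdisj, hpp⟩, ?_⟩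
    intro w
    have hfa : (PostQFA.fa ⟨n', fun σ => M.k σ ^ K, E', hkr,
          Qpa', Qpr', hdisj, hpp⟩ w : ℝ)
        = M.pacc w ^ K / (M.pacc w ^ K + M.prej w ^ K) := by
      show ((projM Qpa' * qRun (k := fun σ => M.k σ ^ K) E' w).trace).re /
        (((projM Qpa' * qRun (k := fun σ => M.k σ ^ K) E' w).trace).re
          + ((projM Qpr' * qRun (k := fun σ => M.k σ ^ K) E' w).trace).re) = _
      rw [hpa w, hpr w]
    constructor
    · intro hw
      rw [hfa]
      exact ratio_up (hpaw w) (hprw w) (M.postPos w) hε0 hε hkey ((hM w).1 hw)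
    · intro hw
      rw [hfa]
      exact ratio_down (hpaw w) (hprw w) (M.postPos w) hε0 hε hkey ((hM w).2 hw)
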